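/- Let Q be a word of length m in the simple reflections of a finite Coxeter system (W,S), let Q' be obtained from Q by doubling the letter at position p (doubled positions p and p+1 of Q'), and let ρ ∈ W. Assume {p} IS a face of Δ(Q,ρ). Then the edge subdivision of Δ(Q',ρ) along the edge η = {p, p+1} with new vertex r is isomorphic to the suspension of Δ(Q,ρ) with suspension vertices a, b, under the bijection of vertex sets sending r to position p of Q, the suspension vertices a, b to p and p+1 respectively, and each other vertex j of Δ(Q',ρ) (j ≠ p, p+1) to ψ^{-1}(j), where ψ : {1,…,m} \ {p} → {1,…,m+1} \ {p,p+1} is the order-preserving bijection (ψ(i) = i for i < p, ψ(i) = i+1 for i > p). -/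

import Mathlib

namespace SubwordComplexNil

variable {B W : Type*} [Group W] {M : CoxeterMatrix B}

/-- The set of positions `P` in the word `Q : Fin m → B` contains an embedded reduced
expression of `ρ`. -/
def ContainsReduced (cs : CoxeterSystem M W) {m : ℕ} (Q : Fin m → B)
    (P : Finset (Fin m)) (ρ : W) : Prop :=
  ∃ I : Finset (Fin m), I ⊆ P ∧ I.card = cs.length ρ ∧
    cs.wordProd ((I.sort (· ≤ ·)).map Q) = ρ

/-- `F` is a face of the subword complex `Δ(Q, ρ)`. -/
def IsFace (cs : CoxeterSystem M W) {m : ℕ} (Q : Fin m → B) (ρ : W)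
    (F : Finset (Fin m)) : Prop :=
  ContainsReduced cs Q Fᶜ ρ

/-- The word obtained from `Q` by doubling the letter at position `p`.  The doubled
positions of the new word are `p.castSucc` and `p.succ`. -/
def doubleAt {m : ℕ} (Q : Fin m → B) (p : Fin m) (i : Fin (m + 1)) : B :=
  if h : (i : ℕ) ≤ (p : ℕ) then Q ⟨i, lt_of_le_of_lt h p.isLt⟩
  else Q ⟨(i : ℕ) - 1, by have := i.isLt; omega⟩

/-- The faces of the edge subdivision `Sub_{{s,t}}(X)` of a simplicial complex `X`
(given as a predicate on finsets of vertices) along the edge `{s, t}` with new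
vertex `r`. -/
def SubdivFaces {V : Type*} [DecidableEq V] (X : Finset V → Prop) (s t r : V)
    (F : Finset V) : Prop :=
  (X F ∧ ¬ {s, t} ⊆ F) ∨
    ∃ σ : Finset V, (X ({s, t} ∪ σ) ∧ Disjoint {s, t} σ) ∧
      (F = insert r σ ∨ F = insert r (insert s σ) ∨ F = insert r (insert t σ))

/-- The faces of the suspension of a simplicial complex `Y` on the vertex set `Fin m`,
with suspension vertices `Sum.inr false` and `Sum.inr true`. -/
def SuspFaces {m : ℕ} (Y : Finset (Fin m) → Prop) (F : Finset (Fin m ⊕ Bool)) : Prop :=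
  ∃ σ : Finset (Fin m), Y σ ∧
    (F = σ.image Sum.inl ∨ F = insert (Sum.inr false) (σ.image Sum.inl) ∨
      F = insert (Sum.inr true) (σ.image Sum.inl))

/-- The vertex bijection: the new subdivision vertex (`none`) goes to position `p` of
`Q`; the doubled positions go to the suspension vertices; every other position `j` of
the doubled word goes to `ψ⁻¹(j) = p.predAbove j`. -/
def theta {m : ℕ} (p : Fin m) : Option (Fin (m + 1)) → Fin m ⊕ Bool
  | none => Sum.inl p
  | some j =>
      if j = p.castSucc then Sum.inr false
      else if j = p.succ then Sum.inr true
      else Sum.inl (p.predAbove j)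

/-! ### Auxiliary list and sorting lemmas -/

open scoped List

lemma sort_filter_append {n : ℕ} (S : Finset (Fin n)) (P : Fin n → Prop) [DecidablePred P]
    (hP : ∀ ⦃x y : Fin n⦄, x ≤ y → P y → P x) :
    S.sort (· ≤ ·) = (S.filter P).sort (· ≤ ·) ++ (S.filter (fun x => ¬ P x)).sort (· ≤ ·) := by
  refine (fun hp hs => List.Perm.eq_of_pairwise' (Finset.pairwise_sort _ _) hs hp) ?_ ?_
  · rw [← Multiset.coe_eq_coe]
    rw [← Multiset.coe_add]
    push_cast [Finset.sort_eq]
    rw [Finset.filter_val, Finset.filter_val, Multiset.filter_add_not]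
  · rw [List.pairwise_append]
    refine ⟨Finset.pairwise_sort _ _, Finset.pairwise_sort _ _, ?_⟩
    intro x hx y hy
    rw [Finset.mem_sort, Finset.mem_filter] at hx hy
    by_contra h
    exact hy.2 (hP (le_of_not_ge h) hx.2)

lemma sort_eq_cons_min {n : ℕ} (S : Finset (Fin n)) (a : Fin n) (ha : a ∈ S)
    (hmin : ∀ b ∈ S.erase a, a ≤ b) :
    S.sort (· ≤ ·) = a :: (S.erase a).sort (· ≤ ·) := by
  conv_lhs => rw [← Finset.insert_erase ha]
  exact Finset.sort_insert _ hmin (Finset.notMem_erase a S)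

lemma containsReduced_iff (cs : CoxeterSystem M W) {m : ℕ} (Q : Fin m → B)
    (P : Finset (Fin m)) (ρ : W) :
    ContainsReduced cs Q P ρ ↔
      ∃ w : List B, w <+ (P.sort (· ≤ ·)).map Q ∧ w.length = cs.length ρ ∧ cs.wordProd w = ρ := by
  constructor
  · rintro ⟨I, hIP, hcard, hprod⟩
    refine ⟨(I.sort (· ≤ ·)).map Q, List.Sublist.map Q ?_, by simp [hcard], hprod⟩
    exact List.sublist_of_subperm_of_pairwise
      (List.subperm_of_subset (Finset.sort_nodup _ _)
        (fun x hx => (Finset.mem_sort _).2 (hIP ((Finset.mem_sort _).1 hx))))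
      (Finset.pairwise_sort _ _) (Finset.pairwise_sort _ _)
  · rintro ⟨w, hsub, hlen, hprod⟩
    obtain ⟨l, hl, rfl⟩ := List.sublist_map_iff.1 hsub
    have hnd : l.Nodup := hl.nodup (Finset.sort_nodup _ _)
    have hsorted : l.Pairwise (· ≤ ·) := (Finset.pairwise_sort _ _).sublist hl
    refine ⟨l.toFinset, ?_, ?_, ?_⟩
    · intro x hx
      exact (Finset.mem_sort _).1 (hl.subset (List.mem_toFinset.1 hx))
    · simp only [List.length_map] at hlen
      rw [List.toFinset_card_of_nodup hnd]; exact hlen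
    · rw [(List.toFinset_sort _ hnd).2 hsorted]; exact hprod

lemma exists_sublist_doubled (cs : CoxeterSystem M W) (ρ : W) (x : B) (l₁ l₂ : List B) :
    (∃ w : List B, w <+ l₁ ++ x :: x :: l₂ ∧ w.length = cs.length ρ ∧ cs.wordProd w = ρ) ↔
    (∃ w : List B, w <+ l₁ ++ x :: l₂ ∧ w.length = cs.length ρ ∧ cs.wordProd w = ρ) := by
  constructor
  · rintro ⟨w, hsub, hlen, hprod⟩
    obtain ⟨w₁, w₂, rfl, h₁, h₂⟩ := List.sublist_append_iff.1 hsub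
    rcases List.sublist_cons_iff.1 h₂ with h₂' | ⟨r, rfl, hr⟩
    · exact ⟨_, h₁.append h₂', hlen, hprod⟩
    rcases List.sublist_cons_iff.1 hr with hr' | ⟨r₂, rfl, hr₂⟩
    · exact ⟨_, h₁.append (hr'.cons₂ x), hlen, hprod⟩
    · exfalso
      have hp2 : cs.wordProd (w₁ ++ x :: x :: r₂) = cs.wordProd (w₁ ++ r₂) := by
        rw [cs.wordProd_append, cs.wordProd_append, cs.wordProd_cons, cs.wordProd_cons,
          cs.simple_mul_simple_cancel_left]
      have hle := cs.length_wordProd_le (w₁ ++ r₂)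
      rw [← hp2, hprod] at hle
      simp only [List.length_append, List.length_cons] at hlen hle
      omega
  · rintro ⟨w, hsub, hlen, hprod⟩
    exact ⟨w, hsub.trans (((List.sublist_cons_self x l₂).cons₂ x).append_left l₁), hlen, hprod⟩

lemma sort_image {k n : ℕ} (f : Fin k → Fin n) (hf : StrictMono f) (S : Finset (Fin k)) :
    (S.image f).sort (· ≤ ·) = (S.sort (· ≤ ·)).map f := by
  have hnd : ((S.sort (· ≤ ·)).map f).Nodup := (Finset.sort_nodup _ _).map hf.injective
  have hsorted : ((S.sort (· ≤ ·)).map f).Pairwise (· ≤ ·) :=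
    List.Pairwise.map f (fun _ _ h => hf.monotone h) (Finset.pairwise_sort _ _)
  have h : ((S.sort (· ≤ ·)).map f).toFinset = S.image f := by
    ext x
    simp only [List.mem_toFinset, List.mem_map, Finset.mem_image, Finset.mem_sort]
  rw [← h, (List.toFinset_sort _ hnd).2 hsorted]

lemma containsReduced_image (cs : CoxeterSystem M W) {k n : ℕ} (Q₀ : Fin k → B)
    (Q₁ : Fin n → B) (f : Fin k → Fin n) (hf : StrictMono f) (hQ : ∀ i, Q₁ (f i) = Q₀ i)
    (S : Finset (Fin k)) (ρ : W) :
    ContainsReduced cs Q₁ (S.image f) ρ ↔ ContainsReduced cs Q₀ S ρ := by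
  rw [containsReduced_iff, containsReduced_iff, sort_image f hf, List.map_map,
    show Q₁ ∘ f = Q₀ from funext hQ]

lemma containsReduced_erase_double (cs : CoxeterSystem M W) {n : ℕ} (R : Fin n → B)
    (S : Finset (Fin n)) (a b : Fin n) (hab : a < b) (hadj : ∀ x : Fin n, a < x → b ≤ x)
    (hR : R a = R b) (ha : a ∈ S) (hb : b ∈ S) (ρ : W) :
    ContainsReduced cs R S ρ ↔ ContainsReduced cs R (S.erase a) ρ := by
  classical
  set S₂ := S.filter (fun x => ¬ x < a) with hS₂
  have hsplit : S.sort (· ≤ ·) = (S.filter (· < a)).sort (· ≤ ·) ++ S₂.sort (· ≤ ·) :=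
    sort_filter_append S (· < a) (fun x y hxy hy => lt_of_le_of_lt hxy hy)
  have haS₂ : a ∈ S₂ := by simp [hS₂, ha]
  have h2 : S₂.sort (· ≤ ·) = a :: (S₂.erase a).sort (· ≤ ·) := by
    refine sort_eq_cons_min _ _ haS₂ ?_
    intro c hc
    rw [Finset.mem_erase, hS₂, Finset.mem_filter] at hc
    exact le_of_not_gt hc.2.2
  have hbS₂ : b ∈ S₂.erase a := by
    rw [Finset.mem_erase, hS₂, Finset.mem_filter]
    exact ⟨hab.ne', hb, not_lt_of_gt hab⟩
  have h3 : (S₂.erase a).sort (· ≤ ·) = b :: ((S₂.erase a).erase b).sort (· ≤ ·) := by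
    refine sort_eq_cons_min _ _ hbS₂ ?_
    intro c hc
    simp only [Finset.mem_erase, hS₂, Finset.mem_filter] at hc
    exact hadj c (lt_of_le_of_ne (le_of_not_gt hc.2.2.2) (Ne.symm hc.2.1))
  have e1 : (S.erase a).filter (· < a) = S.filter (· < a) := by
    ext x
    simp only [Finset.mem_filter, Finset.mem_erase]
    constructor
    · rintro ⟨⟨_, hx⟩, h⟩; exact ⟨hx, h⟩
    · rintro ⟨hx, h⟩; exact ⟨⟨h.ne, hx⟩, h⟩
  have e2 : (S.erase a).filter (fun x => ¬ x < a) = S₂.erase a := by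
    ext x
    simp only [Finset.mem_filter, Finset.mem_erase, hS₂]
    tauto
  have hsplit' : (S.erase a).sort (· ≤ ·) =
      (S.filter (· < a)).sort (· ≤ ·) ++ (S₂.erase a).sort (· ≤ ·) := by
    rw [sort_filter_append (S.erase a) (· < a) (fun x y hxy hy => lt_of_le_of_lt hxy hy), e1, e2]
  rw [containsReduced_iff, containsReduced_iff, hsplit, h2, h3, hsplit', h3,
    List.map_append, List.map_append, List.map_cons, List.map_cons, hR]
  exact exists_sublist_doubled cs ρ (R b) _ _

/-! ### Fin auxiliary lemmas -/

lemma psi_eq_psi' {m : ℕ} (p : Fin m) {q : Fin m} (h : q ≠ p) :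
    (p.succ).succAbove q = (p.castSucc).succAbove q := by
  rcases lt_or_gt_of_ne h with h' | h'
  · rw [Fin.succAbove_succ_of_le _ _ h'.le, Fin.succAbove_castSucc_of_lt _ _ h']
  · rw [Fin.succAbove_succ_of_lt _ _ h', Fin.succAbove_castSucc_of_le _ _ h'.le]

lemma pr_psi' {m : ℕ} (p : Fin m) (i : Fin m) :
    p.predAbove ((p.succ).succAbove i) = i := by
  rcases eq_or_ne i p with rfl | h
  · rw [Fin.succAbove_succ_self, Fin.predAbove_castSucc_self]
  · rw [psi_eq_psi' p h, Fin.predAbove_succAbove]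

lemma psi'_pr {m : ℕ} (p : Fin m) {j : Fin (m + 1)} (h : j ≠ p.succ) :
    (p.succ).succAbove (p.predAbove j) = j := by
  rcases eq_or_ne j p.castSucc with rfl | h2
  · rw [Fin.predAbove_castSucc_self, Fin.succAbove_succ_self]
  · have hp : p.predAbove j ≠ p := by
      intro hc
      have h3 := Fin.succAbove_predAbove h2 (p := p)
      rw [hc, Fin.succAbove_castSucc_self] at h3
      exact h h3.symm
    rw [psi_eq_psi' p hp, Fin.succAbove_predAbove h2]

lemma pr_eq_p_iff {m : ℕ} (p : Fin m) {j : Fin (m + 1)} :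
    p.predAbove j = p ↔ j = p.castSucc ∨ j = p.succ := by
  constructor
  · intro h
    by_contra hc
    push_neg at hc
    have h2 := Fin.succAbove_predAbove hc.1 (p := p)
    rw [h, Fin.succAbove_castSucc_self] at h2
    exact hc.2 h2.symm
  · rintro (rfl | rfl) <;> simp

lemma image_succAbove_compl {n : ℕ} (q : Fin (n + 1)) (T : Finset (Fin n)) :
    Tᶜ.image q.succAbove = (T.image q.succAbove)ᶜ.erase q := by
  ext j
  simp only [Finset.mem_image, Finset.mem_compl, Finset.mem_erase]
  constructor
  · rintro ⟨i, hi, rfl⟩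
    refine ⟨Fin.succAbove_ne q i, ?_⟩
    rintro ⟨i', hi', h⟩
    exact hi (Fin.succAbove_right_injective h ▸ hi')
  · rintro ⟨hne, hnotim⟩
    obtain ⟨i, rfl⟩ := Fin.exists_succAbove_eq hne
    exact ⟨i, fun hiT => hnotim ⟨i, hiT, rfl⟩, rfl⟩

/-! ### `doubleAt` lemmas -/

lemma doubleAt_castSucc {m : ℕ} (Q : Fin m → B) (p : Fin m) :
    doubleAt Q p p.castSucc = Q p := by
  rw [doubleAt, dif_pos (by simp)]
  congr 1

lemma doubleAt_succ {m : ℕ} (Q : Fin m → B) (p : Fin m) :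
    doubleAt Q p p.succ = Q p := by
  rw [doubleAt, dif_neg (by simp)]
  congr 1

lemma doubleAt_psi'' {m : ℕ} (Q : Fin m → B) (p : Fin m) (i : Fin m) :
    doubleAt Q p ((p.castSucc).succAbove i) = Q i := by
  rcases lt_or_ge i p with h | h
  · rw [Fin.succAbove_castSucc_of_lt _ _ h, doubleAt,
      dif_pos (by simpa using h.le)]
    congr 1
  · have h' : (p : ℕ) ≤ (i : ℕ) := h
    rw [Fin.succAbove_castSucc_of_le _ _ h, doubleAt,
      dif_neg (by simp only [Fin.val_succ]; omega)]
    congr 1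

lemma doubleAt_psi' {m : ℕ} (Q : Fin m → B) (p : Fin m) (i : Fin m) :
    doubleAt Q p ((p.succ).succAbove i) = Q i := by
  rcases eq_or_ne i p with rfl | h
  · rw [Fin.succAbove_succ_self, doubleAt_castSucc]
  · rw [psi_eq_psi' p h, doubleAt_psi'']

/-! ### Face correspondence lemmas -/

lemma adj_aux {m : ℕ} (p : Fin m) : ∀ x : Fin (m + 1), p.castSucc < x → p.succ ≤ x := by
  intro x hx
  rw [Fin.lt_def] at hx
  rw [Fin.le_def]
  simp only [Fin.coe_castSucc] at hx
  simp only [Fin.val_succ]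
  omega

lemma letters_eq {m : ℕ} (Q : Fin m → B) (p : Fin m) :
    doubleAt Q p p.castSucc = doubleAt Q p p.succ :=
  (doubleAt_castSucc Q p).trans (doubleAt_succ Q p).symm

variable (cs : CoxeterSystem M W) {m : ℕ} (Q : Fin m → B) (p : Fin m) (ρ : W)

lemma face_none (G : Finset (Fin (m + 1))) (hc : p.castSucc ∉ G) (hs : p.succ ∉ G) :
    IsFace cs (doubleAt Q p) ρ G ↔ IsFace cs Q ρ (G.image p.predAbove) := by
  have hGT : (G.image p.predAbove).image (p.castSucc).succAbove = G := by
    rw [Finset.image_image]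
    have h : Finset.image ((p.castSucc).succAbove ∘ p.predAbove) G = Finset.image id G :=
      Finset.image_congr (fun g hg => Fin.succAbove_predAbove (ne_of_mem_of_not_mem hg hc))
    rw [h, Finset.image_id]
  have key : (G.image p.predAbove)ᶜ.image (p.castSucc).succAbove = Gᶜ.erase p.castSucc := by
    rw [image_succAbove_compl, hGT]
  have h1 : ContainsReduced cs (doubleAt Q p) Gᶜ ρ ↔
      ContainsReduced cs (doubleAt Q p) (Gᶜ.erase p.castSucc) ρ :=
    containsReduced_erase_double cs _ _ _ _ (Fin.castSucc_lt_succ (i := p)) (adj_aux p)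
      (letters_eq Q p) (Finset.mem_compl.2 hc) (Finset.mem_compl.2 hs) ρ
  have h2 := containsReduced_image cs Q (doubleAt Q p) _ (Fin.strictMono_succAbove _)
      (doubleAt_psi'' Q p) (G.image p.predAbove)ᶜ ρ
  rw [key] at h2
  exact h1.trans h2

lemma face_cs (G : Finset (Fin (m + 1))) (hc : p.castSucc ∈ G) (hs : p.succ ∉ G) :
    IsFace cs (doubleAt Q p) ρ G ↔
      IsFace cs Q ρ ((G.erase p.castSucc).image p.predAbove) := by
  have hGT : ((G.erase p.castSucc).image p.predAbove).image (p.castSucc).succAbove =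
      G.erase p.castSucc := by
    rw [Finset.image_image]
    have h : Finset.image ((p.castSucc).succAbove ∘ p.predAbove) (G.erase p.castSucc) =
        Finset.image id (G.erase p.castSucc) :=
      Finset.image_congr (fun g hg => Fin.succAbove_predAbove (Finset.mem_erase.1 hg).1)
    rw [h, Finset.image_id]
  have key : ((G.erase p.castSucc).image p.predAbove)ᶜ.image (p.castSucc).succAbove = Gᶜ := by
    rw [image_succAbove_compl, hGT]
    ext j
    simp only [Finset.mem_erase, Finset.mem_compl]
    constructor
    · rintro ⟨hj, hj2⟩ hjG
      exact hj2 ⟨hj, hjG⟩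
    · intro hjG
      exact ⟨fun h => hjG (h ▸ hc), fun h => hjG h.2⟩
  have h2 := containsReduced_image cs Q (doubleAt Q p) _ (Fin.strictMono_succAbove _)
      (doubleAt_psi'' Q p) ((G.erase p.castSucc).image p.predAbove)ᶜ ρ
  rw [key] at h2
  exact h2

lemma face_sc (G : Finset (Fin (m + 1))) (hs : p.succ ∈ G) (hc : p.castSucc ∉ G) :
    IsFace cs (doubleAt Q p) ρ G ↔
      IsFace cs Q ρ ((G.erase p.succ).image p.predAbove) := by
  have hGT : ((G.erase p.succ).image p.predAbove).image (p.succ).succAbove =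
      G.erase p.succ := by
    rw [Finset.image_image]
    have h : Finset.image ((p.succ).succAbove ∘ p.predAbove) (G.erase p.succ) =
        Finset.image id (G.erase p.succ) :=
      Finset.image_congr (fun g hg => psi'_pr p (Finset.mem_erase.1 hg).1)
    rw [h, Finset.image_id]
  have key : ((G.erase p.succ).image p.predAbove)ᶜ.image (p.succ).succAbove = Gᶜ := by
    rw [image_succAbove_compl, hGT]
    ext j
    simp only [Finset.mem_erase, Finset.mem_compl]
    constructor
    · rintro ⟨hj, hj2⟩ hjG
      exact hj2 ⟨hj, hjG⟩
    · intro hjG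
      exact ⟨fun h => hjG (h ▸ hs), fun h => hjG h.2⟩
  have h2 := containsReduced_image cs Q (doubleAt Q p) _ (Fin.strictMono_succAbove _)
      (doubleAt_psi' Q p) ((G.erase p.succ).image p.predAbove)ᶜ ρ
  rw [key] at h2
  exact h2

lemma face_edge (τ : Finset (Fin (m + 1))) (hc : p.castSucc ∉ τ) (hs : p.succ ∉ τ) :
    IsFace cs (doubleAt Q p) ρ ({p.castSucc, p.succ} ∪ τ) ↔
      IsFace cs Q ρ (insert p (τ.image p.predAbove)) := by
  have hτ : (τ.image p.predAbove).image (p.castSucc).succAbove = τ := by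
    rw [Finset.image_image]
    have h : Finset.image ((p.castSucc).succAbove ∘ p.predAbove) τ = Finset.image id τ :=
      Finset.image_congr (fun g hg => Fin.succAbove_predAbove (ne_of_mem_of_not_mem hg hc))
    rw [h, Finset.image_id]
  have hGT : (insert p (τ.image p.predAbove)).image (p.castSucc).succAbove =
      insert p.succ τ := by
    rw [Finset.image_insert, Fin.succAbove_castSucc_self, hτ]
  have key : (insert p (τ.image p.predAbove))ᶜ.image (p.castSucc).succAbove =
      ({p.castSucc, p.succ} ∪ τ)ᶜ := by
    rw [image_succAbove_compl, hGT]
    ext j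
    simp only [Finset.mem_erase, Finset.mem_compl, Finset.mem_insert, Finset.mem_union,
      Finset.mem_singleton]
    tauto
  have h2 := containsReduced_image cs Q (doubleAt Q p) _ (Fin.strictMono_succAbove _)
      (doubleAt_psi'' Q p) (insert p (τ.image p.predAbove))ᶜ ρ
  rw [key] at h2
  exact h2

/-! ### The inverse vertex map -/

def thetaInv {m : ℕ} (p : Fin m) : Fin m ⊕ Bool → Option (Fin (m + 1))
  | Sum.inl q => if q = p then none else some ((p.castSucc).succAbove q)
  | Sum.inr false => some p.castSucc
  | Sum.inr true => some p.succ

lemma theta_none : theta p none = Sum.inl p := rfl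

lemma theta_castSucc : theta p (some p.castSucc) = Sum.inr false := by simp [theta]

lemma theta_succ : theta p (some p.succ) = Sum.inr true := by
  have h : p.succ ≠ p.castSucc := (Fin.castSucc_lt_succ (i := p)).ne'
  simp [theta, h]

lemma theta_other {j : Fin (m + 1)} (h1 : j ≠ p.castSucc) (h2 : j ≠ p.succ) :
    theta p (some j) = Sum.inl (p.predAbove j) := by simp [theta, h1, h2]

lemma theta_leftInv : Function.LeftInverse (thetaInv p) (theta p) := by
  intro x
  match x with
  | none => simp [theta, thetaInv]
  | some j =>
    rcases eq_or_ne j p.castSucc with rfl | h1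
    · rw [theta_castSucc]; rfl
    rcases eq_or_ne j p.succ with rfl | h2
    · rw [theta_succ]; rfl
    · rw [theta_other p h1 h2]
      show (if p.predAbove j = p then none else some ((p.castSucc).succAbove (p.predAbove j)))
        = some j
      rw [if_neg, Fin.succAbove_predAbove h1]
      intro hc
      rcases (pr_eq_p_iff p).1 hc with h | h
      exacts [h1 h, h2 h]

lemma theta_rightInv : Function.RightInverse (thetaInv p) (theta p) := by
  rintro (q | b)
  · rcases eq_or_ne q p with h | h
    · show theta p (if q = p then none else some ((p.castSucc).succAbove q)) = Sum.inl q
      rw [if_pos h, theta_none, h]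
    · show theta p (if q = p then none else some ((p.castSucc).succAbove q)) = Sum.inl q
      rw [if_neg h]
      have h1 : (p.castSucc).succAbove q ≠ p.castSucc := Fin.succAbove_ne _ _
      have h2 : (p.castSucc).succAbove q ≠ p.succ := by
        intro hc
        exact h (Fin.succAbove_right_injective
          (hc.trans (Fin.succAbove_castSucc_self p).symm))
      rw [theta_other p h1 h2, Fin.predAbove_succAbove]
  · cases b
    · show theta p (some p.castSucc) = Sum.inr false
      exact theta_castSucc p
    · show theta p (some p.succ) = Sum.inr true
      exact theta_succ p

lemma eq_image_some {n : ℕ} (s : Finset (Option (Fin n))) (h : none ∉ s) :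
    ∃ t : Finset (Fin n), s = t.image some := by
  classical
  refine ⟨Finset.univ.filter (fun j => some j ∈ s), ?_⟩
  ext x
  cases x with
  | none => simp [h]
  | some j => simp

/-- If `{p}` is a face of `Δ(Q, ρ)`, then the edge subdivision of `Δ(Q', ρ)` along the
edge formed by the two doubled positions (with new vertex `none`) is isomorphic, under
the vertex bijection `theta p`, to the suspension of `Δ(Q, ρ)`. -/
theorem subdivision_of_doubled_word_eq_suspension [Finite W] (cs : CoxeterSystem M W)
    {m : ℕ} (Q : Fin m → B) (p : Fin m) (ρ : W)
    (hp : IsFace cs Q ρ {p}) :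
    Function.Bijective (theta p) ∧
    ∀ F : Finset (Option (Fin (m + 1))),
      SubdivFaces (fun G => ∃ G₀ : Finset (Fin (m + 1)),
          IsFace cs (doubleAt Q p) ρ G₀ ∧ G = G₀.image some)
        (some p.castSucc) (some p.succ) none F ↔
      SuspFaces (IsFace cs Q ρ) (F.image (theta p)) := by
  classical
  constructor
  · exact Function.bijective_iff_has_inverse.mpr ⟨thetaInv p, theta_leftInv p, theta_rightInv p⟩
  intro F
  have hinj : Function.Injective (theta p) := (theta_leftInv p).injective
  have hFrec : (F.image (theta p)).image (thetaInv p) = F := by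
    rw [Finset.image_image, show thetaInv p ∘ theta p = id from funext (theta_leftInv p),
      Finset.image_id]
  by_cases hF : none ∈ F
  · constructor
    · rintro (⟨⟨G₀, -, hFe⟩, -⟩ | ⟨σ', ⟨⟨G₁, hG₁face, hG₁eq⟩, hdisj⟩, hFcases⟩)
      · exfalso
        rw [hFe] at hF
        obtain ⟨j, -, hj⟩ := Finset.mem_image.1 hF
        exact Option.some_ne_none j hj
      · have hnσ' : none ∉ σ' := by
          intro h
          have h2 : (none : Option (Fin (m + 1))) ∈ G₁.image some := by
            rw [← hG₁eq]; exact Finset.mem_union_right _ h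
          obtain ⟨j, -, hj⟩ := Finset.mem_image.1 h2
          exact Option.some_ne_none j hj
        obtain ⟨τ, rfl⟩ := eq_image_some σ' hnσ'
        have hG₁ : G₁ = {p.castSucc, p.succ} ∪ τ := by
          apply Finset.image_injective (Option.some_injective _)
          rw [← hG₁eq]
          simp [Finset.image_union, Finset.image_insert]
        have hτc : p.castSucc ∉ τ := fun h =>
          Finset.disjoint_left.1 hdisj (Finset.mem_insert_self _ _)
            (Finset.mem_image_of_mem some h)
        have hτs : p.succ ∉ τ := fun h =>
          Finset.disjoint_left.1 hdisj
            (Finset.mem_insert_of_mem (Finset.mem_singleton_self _))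
            (Finset.mem_image_of_mem some h)
        rw [hG₁] at hG₁face
        have hfaceQ : IsFace cs Q ρ (insert p (τ.image p.predAbove)) :=
          (face_edge cs Q p ρ τ hτc hτs).1 hG₁face
        refine ⟨insert p (τ.image p.predAbove), hfaceQ, ?_⟩
        have himg : (τ.image some).image (theta p) = (τ.image p.predAbove).image Sum.inl := by
          rw [Finset.image_image]
          conv_rhs => rw [Finset.image_image]
          exact Finset.image_congr (fun t ht => theta_other p
            (ne_of_mem_of_not_mem ht hτc) (ne_of_mem_of_not_mem ht hτs))
        rcases hFcases with rfl | rfl | rfl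
        · left
          rw [Finset.image_insert, himg, theta_none, Finset.image_insert]
        · right; left
          rw [Finset.image_insert, Finset.image_insert, theta_none, theta_castSucc, himg,
            Finset.image_insert, Finset.insert_comm]
        · right; right
          rw [Finset.image_insert, Finset.image_insert, theta_none, theta_succ, himg,
            Finset.image_insert, Finset.insert_comm]
    · rintro ⟨σ, hσ, hTcases⟩
      right
      have hpσ : p ∈ σ := by
        have h1 : Sum.inl p ∈ F.image (theta p) := Finset.mem_image.2 ⟨none, hF, rfl⟩
        rcases hTcases with hT | hT | hT
        · rw [hT] at h1
          obtain ⟨a, ha, haeq⟩ := Finset.mem_image.1 h1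
          exact Sum.inl.inj haeq ▸ ha
        · rw [hT] at h1
          rcases Finset.mem_insert.1 h1 with h | h
          · exact absurd h (by simp)
          · obtain ⟨a, ha, haeq⟩ := Finset.mem_image.1 h
            exact Sum.inl.inj haeq ▸ ha
        · rw [hT] at h1
          rcases Finset.mem_insert.1 h1 with h | h
          · exact absurd h (by simp)
          · obtain ⟨a, ha, haeq⟩ := Finset.mem_image.1 h
            exact Sum.inl.inj haeq ▸ ha
      set τ := (σ.erase p).image (p.castSucc).succAbove with hτ
      have hτc : p.castSucc ∉ τ := by
        rw [hτ]
        simp only [Finset.mem_image]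
        rintro ⟨a, -, ha⟩
        exact Fin.succAbove_ne _ _ ha
      have hτs : p.succ ∉ τ := by
        rw [hτ]
        simp only [Finset.mem_image]
        rintro ⟨a, haerase, ha⟩
        have h3 : a = p := Fin.succAbove_right_injective
          (ha.trans (Fin.succAbove_castSucc_self p).symm)
        exact (Finset.mem_erase.1 haerase).1 h3
      have hprτ : τ.image p.predAbove = σ.erase p := by
        rw [hτ, Finset.image_image]
        have h : Finset.image (p.predAbove ∘ (p.castSucc).succAbove) (σ.erase p) =
            Finset.image id (σ.erase p) :=
          Finset.image_congr (fun a _ => Fin.predAbove_succAbove p a)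
        rw [h, Finset.image_id]
      have hface' : IsFace cs (doubleAt Q p) ρ ({p.castSucc, p.succ} ∪ τ) := by
        rw [face_edge cs Q p ρ τ hτc hτs, hprτ, Finset.insert_erase hpσ]
        exact hσ
      have himg : (Finset.image Sum.inl σ).image (thetaInv p) = insert none (τ.image some) := by
        rw [Finset.image_image]
        conv_lhs => rw [← Finset.insert_erase hpσ]
        rw [Finset.image_insert]
        have h0 : (thetaInv p ∘ Sum.inl) p = none := by simp [thetaInv]
        rw [h0]
        congr 1
        rw [hτ, Finset.image_image]
        exact Finset.image_congr (fun a ha => by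
          simp only [Function.comp_apply, thetaInv, if_neg (Finset.mem_erase.1 ha).1])
      refine ⟨τ.image some, ⟨⟨{p.castSucc, p.succ} ∪ τ, hface', ?_⟩, ?_⟩, ?_⟩
      · rw [Finset.image_union]
        simp [Finset.image_insert]
      · rw [Finset.disjoint_left]
        intro x hx hx2
        obtain ⟨a, ha, rfl⟩ := Finset.mem_image.1 hx2
        rcases Finset.mem_insert.1 hx with h | h
        · exact hτc (Option.some_injective _ h ▸ ha)
        · rw [Finset.mem_singleton] at h
          exact hτs (Option.some_injective _ h ▸ ha)
      · rcases hTcases with hT | hT | hT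
        · left
          rw [← hFrec, hT, himg]
        · right; left
          rw [← hFrec, hT, Finset.image_insert, himg,
            show thetaInv p (Sum.inr false) = some p.castSucc from rfl, Finset.insert_comm]
        · right; right
          rw [← hFrec, hT, Finset.image_insert, himg,
            show thetaInv p (Sum.inr true) = some p.succ from rfl, Finset.insert_comm]
  · constructor
    · rintro (⟨⟨G₀, hface, rfl⟩, hnsub⟩ | ⟨σ', -, (rfl | rfl | rfl)⟩)
      · by_cases h1 : p.castSucc ∈ G₀
        · by_cases h2 : p.succ ∈ G₀
          · exfalso
            apply hnsub
            intro x hx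
            rcases Finset.mem_insert.1 hx with rfl | hx
            · exact Finset.mem_image_of_mem _ h1
            · rw [Finset.mem_singleton] at hx
              exact hx ▸ Finset.mem_image_of_mem _ h2
          · refine ⟨(G₀.erase p.castSucc).image p.predAbove,
              (face_cs cs Q p ρ G₀ h1 h2).1 hface, Or.inr (Or.inl ?_)⟩
            rw [Finset.image_image]
            conv_lhs => rw [← Finset.insert_erase h1, Finset.image_insert]
            rw [show (theta p ∘ some) p.castSucc = Sum.inr false from theta_castSucc p]
            congr 1
            rw [Finset.image_image]
            exact Finset.image_congr (fun g hg => theta_other p (Finset.mem_erase.1 hg).1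
              (ne_of_mem_of_not_mem (Finset.mem_erase.1 hg).2 h2))
        · by_cases h2 : p.succ ∈ G₀
          · refine ⟨(G₀.erase p.succ).image p.predAbove,
              (face_sc cs Q p ρ G₀ h2 h1).1 hface, Or.inr (Or.inr ?_)⟩
            rw [Finset.image_image]
            conv_lhs => rw [← Finset.insert_erase h2, Finset.image_insert]
            rw [show (theta p ∘ some) p.succ = Sum.inr true from theta_succ p]
            congr 1
            rw [Finset.image_image]
            exact Finset.image_congr (fun g hg =>
              theta_other p (ne_of_mem_of_not_mem (Finset.mem_erase.1 hg).2 h1)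
                (Finset.mem_erase.1 hg).1)
          · refine ⟨G₀.image p.predAbove, (face_none cs Q p ρ G₀ h1 h2).1 hface, Or.inl ?_⟩
            rw [Finset.image_image, Finset.image_image]
            exact Finset.image_congr (fun g hg => theta_other p
              (ne_of_mem_of_not_mem hg h1) (ne_of_mem_of_not_mem hg h2))
      · exact absurd (Finset.mem_insert_self _ _) hF
      · exact absurd (Finset.mem_insert_self _ _) hF
      · exact absurd (Finset.mem_insert_self _ _) hF
    · rintro ⟨σ, hσ, hTcases⟩
      left
      have hpσ : p ∉ σ := by
        intro hp'
        apply hF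
        have h1 : Sum.inl p ∈ F.image (theta p) := by
          rcases hTcases with hT | hT | hT <;> rw [hT]
          · exact Finset.mem_image_of_mem _ hp'
          · exact Finset.mem_insert_of_mem (Finset.mem_image_of_mem _ hp')
          · exact Finset.mem_insert_of_mem (Finset.mem_image_of_mem _ hp')
        obtain ⟨x, hx, hxeq⟩ := Finset.mem_image.1 h1
        have h3 : x = none := hinj (hxeq.trans (theta_none p).symm)
        exact h3 ▸ hx
      have hcc : p.castSucc ∉ σ.image (p.castSucc).succAbove := by
        simp only [Finset.mem_image]
        rintro ⟨a, -, ha⟩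
        exact Fin.succAbove_ne _ _ ha
      have hcs : p.succ ∉ σ.image (p.castSucc).succAbove := by
        simp only [Finset.mem_image]
        rintro ⟨a, ha, haeq⟩
        have h3 : a = p := Fin.succAbove_right_injective
          (haeq.trans (Fin.succAbove_castSucc_self p).symm)
        exact hpσ (h3 ▸ ha)
      have hprcc : (σ.image (p.castSucc).succAbove).image p.predAbove = σ := by
        rw [Finset.image_image]
        have h : Finset.image (p.predAbove ∘ (p.castSucc).succAbove) σ = Finset.image id σ :=
          Finset.image_congr (fun a _ => Fin.predAbove_succAbove p a)
        rw [h, Finset.image_id]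
      have hsc : p.castSucc ∉ σ.image (p.succ).succAbove := by
        simp only [Finset.mem_image]
        rintro ⟨a, ha, haeq⟩
        have h3 : a = p := Fin.succAbove_right_injective
          (haeq.trans (Fin.succAbove_succ_self p).symm)
        exact hpσ (h3 ▸ ha)
      have hss : p.succ ∉ σ.image (p.succ).succAbove := by
        simp only [Finset.mem_image]
        rintro ⟨a, -, ha⟩
        exact Fin.succAbove_ne _ _ ha
      have hprss : (σ.image (p.succ).succAbove).image p.predAbove = σ := by
        rw [Finset.image_image]
        have h : Finset.image (p.predAbove ∘ (p.succ).succAbove) σ = Finset.image id σ :=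
          Finset.image_congr (fun a _ => pr_psi' p a)
        rw [h, Finset.image_id]
      rcases hTcases with hT | hT | hT
      · refine ⟨⟨σ.image (p.castSucc).succAbove, ?_, ?_⟩, ?_⟩
        · rw [face_none cs Q p ρ _ hcc hcs, hprcc]
          exact hσ
        · rw [← hFrec, hT, Finset.image_image, Finset.image_image]
          exact Finset.image_congr (fun a ha => by
            simp only [Function.comp_apply, thetaInv,
              if_neg (ne_of_mem_of_not_mem ha hpσ)])
        · intro hsub
          have h1 : some p.castSucc ∈ F := hsub (Finset.mem_insert_self _ _)
          have h2 : Sum.inr false ∈ F.image (theta p) :=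
            Finset.mem_image.2 ⟨some p.castSucc, h1, theta_castSucc p⟩
          rw [hT] at h2
          obtain ⟨a, -, haeq⟩ := Finset.mem_image.1 h2
          exact absurd haeq (by simp)
      · refine ⟨⟨insert p.castSucc (σ.image (p.castSucc).succAbove), ?_, ?_⟩, ?_⟩
        · have hcmem : p.castSucc ∈ insert p.castSucc (σ.image (p.castSucc).succAbove) :=
            Finset.mem_insert_self _ _
          have hsnot : p.succ ∉ insert p.castSucc (σ.image (p.castSucc).succAbove) := by
            rw [Finset.mem_insert]
            rintro (h | h)
            · exact absurd h (Fin.castSucc_lt_succ (i := p)).ne'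
            · exact hcs h
          rw [face_cs cs Q p ρ _ hcmem hsnot, Finset.erase_insert hcc, hprcc]
          exact hσ
        · rw [← hFrec, hT, Finset.image_insert,
            show thetaInv p (Sum.inr false) = some p.castSucc from rfl, Finset.image_insert]
          congr 1
          rw [Finset.image_image, Finset.image_image]
          exact Finset.image_congr (fun a ha => by
            simp only [Function.comp_apply, thetaInv,
              if_neg (ne_of_mem_of_not_mem ha hpσ)])
        · intro hsub
          have h1 : some p.succ ∈ F :=
            hsub (Finset.mem_insert_of_mem (Finset.mem_singleton_self _))
          have h2 : Sum.inr true ∈ F.image (theta p) :=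
            Finset.mem_image.2 ⟨some p.succ, h1, theta_succ p⟩
          rw [hT] at h2
          rcases Finset.mem_insert.1 h2 with h | h
          · exact absurd h (by simp)
          · obtain ⟨a, -, haeq⟩ := Finset.mem_image.1 h
            exact absurd haeq (by simp)
      · refine ⟨⟨insert p.succ (σ.image (p.succ).succAbove), ?_, ?_⟩, ?_⟩
        · have hsmem : p.succ ∈ insert p.succ (σ.image (p.succ).succAbove) :=
            Finset.mem_insert_self _ _
          have hcnot : p.castSucc ∉ insert p.succ (σ.image (p.succ).succAbove) := by
            rw [Finset.mem_insert]
            rintro (h | h)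
            · exact absurd h (Fin.castSucc_lt_succ (i := p)).ne
            · exact hsc h
          rw [face_sc cs Q p ρ _ hsmem hcnot, Finset.erase_insert hss, hprss]
          exact hσ
        · rw [← hFrec, hT, Finset.image_insert,
            show thetaInv p (Sum.inr true) = some p.succ from rfl, Finset.image_insert]
          congr 1
          rw [Finset.image_image, Finset.image_image]
          refine Finset.image_congr (fun a ha => ?_)
          have hne : a ≠ p := ne_of_mem_of_not_mem ha hpσ
          simp only [Function.comp_apply, thetaInv, if_neg hne]
          rw [psi_eq_psi' p hne]
        · intro hsub
          have h1 : some p.castSucc ∈ F := hsub (Finset.mem_insert_self _ _)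
          have h2 : Sum.inr false ∈ F.image (theta p) :=
            Finset.mem_image.2 ⟨some p.castSucc, h1, theta_castSucc p⟩
          rw [hT] at h2
          rcases Finset.mem_insert.1 h2 with h | h
          · exact absurd h (by simp)
          · obtain ⟨a, -, haeq⟩ := Finset.mem_image.1 h
            exact absurd haeq (by simp)

end SubwordComplexNil
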